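/- For every n ≥ 0, T(F^n) = U(F^n) + G^n lies in the Z/2-linear span of the powers F^k with k + 4 ≤ n and k ≡ n (mod 2). In particular T maps the subring Z/2[F] into itself. -/
import Mathlib

open Polynomial

noncomputable section

/-- `F = r(r+1)^5` in `(ZMod 2)[r]`. -/
def Fp : Polynomial (ZMod 2) := X * (X + 1) ^ 5

/-- `G = r^5(r+1)` in `(ZMod 2)[r]`. -/
def Gp : Polynomial (ZMod 2) := X ^ 5 * (X + 1)

/-- The images `v_0, …, v_5` of `1, r, …, r^5` under `U`. -/
def v : ℕ → Polynomial (ZMod 2)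
  | 0 => 1
  | 1 => X
  | 2 => X ^ 2
  | 3 => X ^ 3 + X ^ 2 + X
  | 4 => X ^ 4
  | 5 => X ^ 5 + X ^ 4 + X
  | _ => 0

/-- `U` is the unique `ZMod 2`-linear map with `U (G^k r^i) = F^k v_i` for `0 ≤ i ≤ 5`. -/
def IsU (U : Polynomial (ZMod 2) →ₗ[ZMod 2] Polynomial (ZMod 2)) : Prop :=
  ∀ k i : ℕ, i ≤ 5 → U (Gp ^ k * X ^ i) = Fp ^ k * v i

lemma h2 : (2 : Polynomial (ZMod 2)) = 0 := by
  have h : ((2 : ZMod 2)) = 0 := rfl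
  calc (2 : Polynomial (ZMod 2)) = C 2 := by rw [map_ofNat]
    _ = C 0 := by rw [h]
    _ = 0 := map_zero C

lemma I0 : Fp * X ^ 0 = Gp ^ 1 * X ^ 0 + Gp ^ 0 * X ^ 2 + Gp ^ 0 * X ^ 1 := by
  simp only [Fp, Gp]
  linear_combination (2 * X ^ 5 + 5 * X ^ 4 + 5 * X ^ 3 + 2 * X ^ 2 : Polynomial (ZMod 2)) * h2

lemma I1 : Fp * X ^ 1 = Gp ^ 1 * X ^ 1 + Gp ^ 0 * X ^ 3 + Gp ^ 0 * X ^ 2 := by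
  simp only [Fp, Gp]
  linear_combination (2 * X ^ 6 + 5 * X ^ 5 + 5 * X ^ 4 + 2 * X ^ 3 : Polynomial (ZMod 2)) * h2

lemma I2 : Fp * X ^ 2 = Gp ^ 1 * X ^ 2 + Gp ^ 0 * X ^ 4 + Gp ^ 0 * X ^ 3 := by
  simp only [Fp, Gp]
  linear_combination (2 * X ^ 7 + 5 * X ^ 6 + 5 * X ^ 5 + 2 * X ^ 4 : Polynomial (ZMod 2)) * h2

lemma I3 : Fp * X ^ 3 = Gp ^ 1 * X ^ 3 + Gp ^ 0 * X ^ 5 + Gp ^ 0 * X ^ 4 := by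
  simp only [Fp, Gp]
  linear_combination (2 * X ^ 8 + 5 * X ^ 7 + 5 * X ^ 6 + 2 * X ^ 5 : Polynomial (ZMod 2)) * h2

lemma I4 : Fp * X ^ 4 = Gp ^ 1 * X ^ 4 + Gp ^ 1 * X ^ 0 := by
  simp only [Fp, Gp]
  linear_combination (2 * X ^ 9 + 5 * X ^ 8 + 5 * X ^ 7 + 2 * X ^ 6 : Polynomial (ZMod 2)) * h2

lemma I5 : Fp * X ^ 5 = Gp ^ 1 * X ^ 5 + Gp ^ 1 * X ^ 1 := by
  simp only [Fp, Gp]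
  linear_combination (2 * X ^ 10 + 5 * X ^ 9 + 5 * X ^ 8 + 2 * X ^ 7 : Polynomial (ZMod 2)) * h2

lemma hrel : Fp ^ 6 + Fp ^ 4 * Gp ^ 2 + Fp ^ 2 * Gp ^ 4 + Fp * Gp + Gp ^ 6 = 0 := by
  simp only [Fp, Gp]
  linear_combination (2 * X ^ 36 + 36 * X ^ 35 + 386 * X ^ 34 + 2992 * X ^ 33 + 17868 * X ^ 32 + 85424 * X ^ 31 + 335696 * X ^ 30 + 1104888 * X ^ 29 + 3087849 * X ^ 28 + 7403286 * X ^ 27 + 15346331 * X ^ 26 + 27666548 * X ^ 25 + 43569981 * X ^ 24 + 60128642 * X ^ 23 + 72871223 * X ^ 22 + 77644032 * X ^ 21 + 72748644 * X ^ 20 + 59893092 * X ^ 19 + 43250270 * X ^ 18 + 27314420 * X ^ 17 + 15022623 * X ^ 16 + 7153586 * X ^ 15 + 2926463 * X ^ 14 + 1017900 * X ^ 13 + 296888 * X ^ 12 + 71256 * X ^ 11 + 13710 * X ^ 10 + 2040 * X ^ 9 + 225 * X ^ 8 + 18 * X ^ 7 + X ^ 6 : Polynomial (ZMod 2)) * 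h2

lemma E1 : Fp ^ 1 = Gp ^ 0 * X ^ 1 + Gp ^ 0 * X ^ 2 + Gp ^ 1 * X ^ 0 := by
  simp only [Fp, Gp]
  linear_combination (2 * X ^ 5 + 5 * X ^ 4 + 5 * X ^ 3 + 2 * X ^ 2 : Polynomial (ZMod 2)) * h2

lemma E2 : Fp ^ 2 = Gp ^ 0 * X ^ 2 + Gp ^ 0 * X ^ 4 + Gp ^ 2 * X ^ 0 := by
  simp only [Fp, Gp]
  linear_combination (4 * X ^ 11 + 22 * X ^ 10 + 60 * X ^ 9 + 105 * X ^ 8 + 126 * X ^ 7 + 105 * X ^ 6 + 60 * X ^ 5 + 22 * X ^ 4 + 5 * X ^ 3 : Polynomial (ZMod 2)) * h2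

lemma E3 : Fp ^ 3 = Gp ^ 0 * X ^ 3 + Gp ^ 0 * X ^ 4 + Gp ^ 1 * X ^ 0 + Gp ^ 1 * X ^ 2 + Gp ^ 1 * X ^ 4 + Gp ^ 2 * X ^ 1 + Gp ^ 2 * X ^ 2 + Gp ^ 3 * X ^ 0 := by
  simp only [Fp, Gp]
  linear_combination (6 * X ^ 17 + 51 * X ^ 16 + 227 * X ^ 15 + 682 * X ^ 14 + 1500 * X ^ 13 + 2501 * X ^ 12 + 3217 * X ^ 11 + 3217 * X ^ 10 + 2502 * X ^ 9 + 1501 * X ^ 8 + 682 * X ^ 7 + 227 * X ^ 6 + 52 * X ^ 5 + 7 * X ^ 4 : Polynomial (ZMod 2)) * h2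

lemma E4 : Fp ^ 4 = Gp ^ 0 * X ^ 4 + Gp ^ 0 * X ^ 5 + Gp ^ 1 * X ^ 0 + Gp ^ 1 * X ^ 1 + Gp ^ 1 * X ^ 2 + Gp ^ 4 * X ^ 0 := by
  simp only [Fp, Gp]
  linear_combination (8 * X ^ 23 + 92 * X ^ 22 + 568 * X ^ 21 + 2422 * X ^ 20 + 7752 * X ^ 19 + 19380 * X ^ 18 + 38760 * X ^ 17 + 62985 * X ^ 16 + 83980 * X ^ 15 + 92378 * X ^ 14 + 83980 * X ^ 13 + 62985 * X ^ 12 + 38760 * X ^ 11 + 19380 * X ^ 10 + 7752 * X ^ 9 + 2422 * X ^ 8 + 569 * X ^ 7 + 94 * X ^ 6 + 9 * X ^ 5 : Polynomial (ZMod 2)) * h2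

lemma E5 : Fp ^ 5 = Gp ^ 1 * X ^ 0 + Gp ^ 1 * X ^ 5 + Gp ^ 2 * X ^ 0 + Gp ^ 2 * X ^ 1 + Gp ^ 2 * X ^ 2 + Gp ^ 4 * X ^ 1 + Gp ^ 4 * X ^ 2 + Gp ^ 5 * X ^ 0 := by
  simp only [Fp, Gp]
  linear_combination (10 * X ^ 29 + 145 * X ^ 28 + 1145 * X ^ 27 + 6322 * X ^ 26 + 26562 * X ^ 25 + 88545 * X ^ 24 + 240345 * X ^ 23 + 540785 * X ^ 22 + 1021487 * X ^ 21 + 1634380 * X ^ 20 + 2228700 * X ^ 19 + 2600150 * X ^ 18 + 2600150 * X ^ 17 + 2228700 * X ^ 16 + 1634380 * X ^ 15 + 1021487 * X ^ 14 + 540786 * X ^ 13 + 240348 * X ^ 12 + 88548 * X ^ 11 + 26564 * X ^ 10 + 6325 * X ^ 9 + 1150 * X ^ 8 + 150 * X ^ 7 + 12 * X ^ 6 : Polynomial (ZMod 2)) * h2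

lemma V0 : Fp ^ 0 * v 0 + Gp ^ 0 = 0 := by
  simp only [Fp, Gp, v]
  linear_combination (1 : Polynomial (ZMod 2)) * h2

lemma V1 : Fp ^ 0 * v 1 + Fp ^ 0 * v 2 + Fp ^ 1 * v 0 + Gp ^ 1 = 0 := by
  simp only [Fp, Gp, v]
  linear_combination (X ^ 6 + 3 * X ^ 5 + 5 * X ^ 4 + 5 * X ^ 3 + 3 * X ^ 2 + X : Polynomial (ZMod 2)) * h2

lemma V2 : Fp ^ 0 * v 2 + Fp ^ 0 * v 4 + Fp ^ 2 * v 0 + Gp ^ 2 = 0 := by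
  simp only [Fp, Gp, v]
  linear_combination (X ^ 12 + 6 * X ^ 11 + 23 * X ^ 10 + 60 * X ^ 9 + 105 * X ^ 8 + 126 * X ^ 7 + 105 * X ^ 6 + 60 * X ^ 5 + 23 * X ^ 4 + 5 * X ^ 3 + X ^ 2 : Polynomial (ZMod 2)) * h2

lemma V3 : Fp ^ 0 * v 3 + Fp ^ 0 * v 4 + Fp ^ 1 * v 0 + Fp ^ 1 * v 2 + Fp ^ 1 * v 4 + Fp ^ 2 * v 1 + Fp ^ 2 * v 2 + Fp ^ 3 * v 0 + Gp ^ 3 = 0 := by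
  simp only [Fp, Gp, v]
  linear_combination (X ^ 18 + 9 * X ^ 17 + 54 * X ^ 16 + 228 * X ^ 15 + 683 * X ^ 14 + 1507 * X ^ 13 + 2530 * X ^ 12 + 3300 * X ^ 11 + 3383 * X ^ 10 + 2736 * X ^ 9 + 1738 * X ^ 8 + 855 * X ^ 7 + 318 * X ^ 6 + 88 * X ^ 5 + 21 * X ^ 4 + 7 * X ^ 3 + 3 * X ^ 2 + X : Polynomial (ZMod 2)) * h2

lemma V4 : Fp ^ 0 * v 4 + Fp ^ 0 * v 5 + Fp ^ 1 * v 0 + Fp ^ 1 * v 1 + Fp ^ 1 * v 2 + Fp ^ 4 * v 0 + Gp ^ 4 = 0 := by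
  simp only [Fp, Gp, v]
  linear_combination (X ^ 24 + 12 * X ^ 23 + 98 * X ^ 22 + 572 * X ^ 21 + 2423 * X ^ 20 + 7752 * X ^ 19 + 19380 * X ^ 18 + 38760 * X ^ 17 + 62985 * X ^ 16 + 83980 * X ^ 15 + 92378 * X ^ 14 + 83980 * X ^ 13 + 62985 * X ^ 12 + 38760 * X ^ 11 + 19380 * X ^ 10 + 7752 * X ^ 9 + 2423 * X ^ 8 + 573 * X ^ 7 + 103 * X ^ 6 + 23 * X ^ 5 + 14 * X ^ 4 + 8 * X ^ 3 + 3 * X ^ 2 + X : Polynomial (ZMod 2)) * h2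

lemma V5 : Fp ^ 1 * v 0 + Fp ^ 1 * v 5 + Fp ^ 2 * v 0 + Fp ^ 2 * v 1 + Fp ^ 2 * v 2 + Fp ^ 4 * v 1 + Fp ^ 4 * v 2 + Fp ^ 5 * v 0 + Gp ^ 5 = Fp := by
  simp only [Fp, Gp, v]
  linear_combination (X ^ 30 + 15 * X ^ 29 + 155 * X ^ 28 + 1155 * X ^ 27 + 6328 * X ^ 26 + 26576 * X ^ 25 + 88655 * X ^ 24 + 241015 * X ^ 23 + 543780 * X ^ 22 + 1031662 * X ^ 21 + 1661512 * X ^ 20 + 2286840 * X ^ 19 + 2701895 * X ^ 18 + 2747115 * X ^ 17 + 2405058 * X ^ 16 + 1810738 * X ^ 15 + 1168453 * X ^ 14 + 642538 * X ^ 13 + 298518 * X ^ 12 + 115770 * X ^ 11 + 36930 * X ^ 10 + 9616 * X ^ 9 + 2161 * X ^ 8 + 554 * X ^ 7 + 216 * X ^ 6 + 94 * X ^ 5 + 33 * X ^ 4 + 8 * X ^ 3 + X ^ 2 : Polynomial (ZMod 2)) * h2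

/-- The span of the basis `G^k X^i`. -/
def S : Submodule (ZMod 2) (Polynomial (ZMod 2)) :=
  Submodule.span (ZMod 2) {p | ∃ k i : ℕ, i ≤ 5 ∧ p = Gp ^ k * X ^ i}

lemma basis_mem (k i : ℕ) (hi : i ≤ 5) : Gp ^ k * X ^ i ∈ S :=
  Submodule.subset_span ⟨k, i, hi, rfl⟩

lemma S_mul_F {x : Polynomial (ZMod 2)} (hx : x ∈ S) : Fp * x ∈ S := by
  induction hx using Submodule.span_induction with
  | mem p hp =>
    obtain ⟨k, i, hi, rfl⟩ := hp
    interval_cases i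
    · have e : Fp * (Gp ^ k * X ^ 0) = Gp ^ (k+1) * X ^ 0 + Gp ^ (k+0) * X ^ 2 + Gp ^ (k+0) * X ^ 1 := by
        linear_combination Gp ^ k * I0
      rw [e]
      exact add_mem (add_mem (basis_mem _ _ (by norm_num)) (basis_mem _ _ (by norm_num))) (basis_mem _ _ (by norm_num))
    · have e : Fp * (Gp ^ k * X ^ 1) = Gp ^ (k+1) * X ^ 1 + Gp ^ (k+0) * X ^ 3 + Gp ^ (k+0) * X ^ 2 := by
        linear_combination Gp ^ k * I1
      rw [e]
      exact add_mem (add_mem (basis_mem _ _ (by norm_num)) (basis_mem _ _ (by norm_num))) (basis_mem _ _ (by norm_num))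
    · have e : Fp * (Gp ^ k * X ^ 2) = Gp ^ (k+1) * X ^ 2 + Gp ^ (k+0) * X ^ 4 + Gp ^ (k+0) * X ^ 3 := by
        linear_combination Gp ^ k * I2
      rw [e]
      exact add_mem (add_mem (basis_mem _ _ (by norm_num)) (basis_mem _ _ (by norm_num))) (basis_mem _ _ (by norm_num))
    · have e : Fp * (Gp ^ k * X ^ 3) = Gp ^ (k+1) * X ^ 3 + Gp ^ (k+0) * X ^ 5 + Gp ^ (k+0) * X ^ 4 := by
        linear_combination Gp ^ k * I3
      rw [e]
      exact add_mem (add_mem (basis_mem _ _ (by norm_num)) (basis_mem _ _ (by norm_num))) (basis_mem _ _ (by norm_num))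
    · have e : Fp * (Gp ^ k * X ^ 4) = Gp ^ (k+1) * X ^ 4 + Gp ^ (k+1) * X ^ 0 := by
        linear_combination Gp ^ k * I4
      rw [e]
      exact add_mem (basis_mem _ _ (by norm_num)) (basis_mem _ _ (by norm_num))
    · have e : Fp * (Gp ^ k * X ^ 5) = Gp ^ (k+1) * X ^ 5 + Gp ^ (k+1) * X ^ 1 := by
        linear_combination Gp ^ k * I5
      rw [e]
      exact add_mem (basis_mem _ _ (by norm_num)) (basis_mem _ _ (by norm_num))
  | zero => rw [mul_zero]; exact zero_mem S
  | add x y hx hy ihx ihy => rw [mul_add]; exact add_mem ihx ihy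
  | smul c x hx ihx => rw [mul_smul_comm]; exact Submodule.smul_mem S c ihx

lemma Fpow_mem (m : ℕ) : Fp ^ m ∈ S := by
  induction m with
  | zero =>
    have : (Fp ^ 0 : Polynomial (ZMod 2)) = Gp ^ 0 * X ^ 0 := by ring
    rw [this]; exact basis_mem 0 0 (by norm_num)
  | succ m ih =>
    rw [pow_succ, mul_comm]
    exact S_mul_F ih

lemma U_mul (U : Polynomial (ZMod 2) →ₗ[ZMod 2] Polynomial (ZMod 2)) (hU : IsU U)
    (j : ℕ) {x : Polynomial (ZMod 2)} (hx : x ∈ S) :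
    U (Gp ^ j * x) = Fp ^ j * U x := by
  induction hx using Submodule.span_induction with
  | mem p hp =>
    obtain ⟨k, i, hi, rfl⟩ := hp
    have e : Gp ^ j * (Gp ^ k * X ^ i) = Gp ^ (j + k) * X ^ i := by
      rw [pow_add]; ring
    rw [e, hU (j + k) i hi, hU k i hi, pow_add]; ring
  | zero => rw [mul_zero, map_zero, mul_zero]
  | add x y hx hy ihx ihy => rw [mul_add, map_add, map_add, ihx, ihy, mul_add]
  | smul c x hx ihx => rw [mul_smul_comm, map_smul, map_smul, ihx, mul_smul_comm]

lemma recF (m : ℕ) : Fp ^ (m + 6) =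
    Gp ^ 2 * Fp ^ (m + 4) + Gp ^ 4 * Fp ^ (m + 2) + Gp ^ 1 * Fp ^ (m + 1) + Gp ^ 6 * Fp ^ m := by
  linear_combination Fp ^ m * hrel -
    (Gp ^ 2 * Fp ^ (m + 4) + Gp ^ 4 * Fp ^ (m + 2) + Gp ^ 1 * Fp ^ (m + 1) + Gp ^ 6 * Fp ^ m) * h2

lemma recG (m : ℕ) : Gp ^ (m + 6) =
    Fp ^ 2 * Gp ^ (m + 4) + Fp ^ 4 * Gp ^ (m + 2) + Fp ^ 1 * Gp ^ (m + 1) + Fp ^ 6 * Gp ^ m := by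
  linear_combination Gp ^ m * hrel -
    (Fp ^ 2 * Gp ^ (m + 4) + Fp ^ 4 * Gp ^ (m + 2) + Fp ^ 1 * Gp ^ (m + 1) + Fp ^ 6 * Gp ^ m) * h2

lemma span_mul_pow (n j m : ℕ) (hmn : m + j ≤ n) (hpar : (m + j) % 2 = n % 2) {x : Polynomial (ZMod 2)}
    (hx : x ∈ Submodule.span (ZMod 2)
        {p : Polynomial (ZMod 2) | ∃ k : ℕ, k + 4 ≤ m ∧ k % 2 = m % 2 ∧ p = Fp ^ k}) :
    Fp ^ j * x ∈ Submodule.span (ZMod 2)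
        {p : Polynomial (ZMod 2) | ∃ k : ℕ, k + 4 ≤ n ∧ k % 2 = n % 2 ∧ p = Fp ^ k} := by
  induction hx using Submodule.span_induction with
  | mem p hp =>
    obtain ⟨k, hk4, hk2, rfl⟩ := hp
    refine Submodule.subset_span ⟨j + k, by omega, by omega, by rw [pow_add]⟩
  | zero => rw [mul_zero]; exact zero_mem _
  | add x y hx hy ihx ihy => rw [mul_add]; exact add_mem ihx ihy
  | smul c x hx ihx => rw [mul_smul_comm]; exact Submodule.smul_mem _ c ihx

theorem T_span (U : Polynomial (ZMod 2) →ₗ[ZMod 2] Polynomial (ZMod 2)) (hU : IsU U) (n : ℕ) :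
    U (Fp ^ n) + Gp ^ n ∈
      Submodule.span (ZMod 2)
        {p : Polynomial (ZMod 2) | ∃ k : ℕ, k + 4 ≤ n ∧ k % 2 = n % 2 ∧ p = Fp ^ k} := by
  induction n using Nat.strong_induction_on with
  | _ n ih =>
  rcases Nat.lt_or_ge n 6 with h6 | h6
  · interval_cases n
    · have e0 : (Fp ^ 0 : Polynomial (ZMod 2)) = Gp ^ 0 * X ^ 0 := by ring
      have : U (Fp ^ 0) + Gp ^ 0 = 0 := by
        rw [e0, hU 0 0 (by norm_num)]
        linear_combination V0
      rw [this]; exact zero_mem _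
    · have : U (Fp ^ 1) + Gp ^ 1 = 0 := by
        rw [E1, map_add, map_add, hU 0 1 (by norm_num), hU 0 2 (by norm_num), hU 1 0 (by norm_num)]
        linear_combination V1
      rw [this]; exact zero_mem _
    · have : U (Fp ^ 2) + Gp ^ 2 = 0 := by
        rw [E2, map_add, map_add, hU 0 2 (by norm_num), hU 0 4 (by norm_num), hU 2 0 (by norm_num)]
        linear_combination V2
      rw [this]; exact zero_mem _
    · have : U (Fp ^ 3) + Gp ^ 3 = 0 := by
        rw [E3, map_add, map_add, map_add, map_add, map_add, map_add, map_add, hU 0 3 (by norm_num), hU 0 4 (by norm_num), hU 1 0 (by norm_num), hU 1 2 (by norm_num), hU 1 4 (by norm_num), hU 2 1 (by norm_num), hU 2 2 (by norm_num), hU 3 0 (by norm_num)]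
        linear_combination V3
      rw [this]; exact zero_mem _
    · have : U (Fp ^ 4) + Gp ^ 4 = 0 := by
        rw [E4, map_add, map_add, map_add, map_add, map_add, hU 0 4 (by norm_num), hU 0 5 (by norm_num), hU 1 0 (by norm_num), hU 1 1 (by norm_num), hU 1 2 (by norm_num), hU 4 0 (by norm_num)]
        linear_combination V4
      rw [this]; exact zero_mem _
    · have : U (Fp ^ 5) + Gp ^ 5 = Fp := by
        rw [E5, map_add, map_add, map_add, map_add, map_add, map_add, map_add, hU 1 0 (by norm_num), hU 1 5 (by norm_num), hU 2 0 (by norm_num), hU 2 1 (by norm_num), hU 2 2 (by norm_num), hU 4 1 (by norm_num), hU 4 2 (by norm_num), hU 5 0 (by norm_num)]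
        linear_combination V5
      rw [this]
      exact Submodule.subset_span ⟨1, by norm_num, by norm_num, (pow_one Fp).symm⟩
  · obtain ⟨m, rfl⟩ : ∃ m, n = m + 6 := ⟨n - 6, by omega⟩
    have hUrec : U (Fp ^ (m + 6)) =
        Fp ^ 2 * U (Fp ^ (m + 4)) + Fp ^ 4 * U (Fp ^ (m + 2)) +
          Fp ^ 1 * U (Fp ^ (m + 1)) + Fp ^ 6 * U (Fp ^ m) := by
      rw [recF m, map_add, map_add, map_add,
        U_mul U hU 2 (Fpow_mem (m + 4)), U_mul U hU 4 (Fpow_mem (m + 2)),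
        U_mul U hU 1 (Fpow_mem (m + 1)), U_mul U hU 6 (Fpow_mem m)]
    have key : U (Fp ^ (m + 6)) + Gp ^ (m + 6) =
        Fp ^ 2 * (U (Fp ^ (m + 4)) + Gp ^ (m + 4)) +
          Fp ^ 4 * (U (Fp ^ (m + 2)) + Gp ^ (m + 2)) +
          Fp ^ 1 * (U (Fp ^ (m + 1)) + Gp ^ (m + 1)) +
          Fp ^ 6 * (U (Fp ^ m) + Gp ^ m) := by
      rw [hUrec, recG m]; ring
    rw [key]
    refine add_mem (add_mem (add_mem ?_ ?_) ?_) ?_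
    · exact span_mul_pow _ 2 (m + 4) (by omega) (by omega) (ih (m + 4) (by omega))
    · exact span_mul_pow _ 4 (m + 2) (by omega) (by omega) (ih (m + 2) (by omega))
    · exact span_mul_pow _ 1 (m + 1) (by omega) (by omega) (ih (m + 1) (by omega))
    · exact span_mul_pow _ 6 m (by omega) (by omega) (ih m (by omega))

end
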